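/- Let n ≥ 2 and let K₁, …, Kₙ be arbitrary subgroups of a group G; write K̄ᵢ for the normal closure of Kᵢ in G. Then H(K₁, …, Kₙ, ⊤) ≤ H(K̄₁, …, K̄ₙ), where ⊤ denotes G viewed as a subgroup of itself; that is, the (n+1)-fold Higgins commutator of K₁, …, Kₙ and G is contained in the n-fold Higgins commutator of the normal closures. -/
import Mathlib


/-- The homomorphism on the free product `Monoid.CoprodI` of the subgroups `K i`
that is trivial on the `k`-th free factor and the canonical inclusion on every
other free factor. -/
def piHat {G : Type*} [Group G] {n : ℕ} (K : Fin n → Subgroup G) (k : Fin n) :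
    Monoid.CoprodI (fun i => ↥(K i)) →* Monoid.CoprodI (fun i => ↥(K i)) :=
  Monoid.CoprodI.lift
    (fun i => if i = k then 1 else Monoid.CoprodI.of (M := fun i => ↥(K i)) (i := i))

/-- The `n`-fold co-smash product `K₁ ◇ ⋯ ◇ Kₙ` of subgroups of `G`: the
intersection of the kernels of the homomorphisms `piHat K k`. -/
def cosmash {G : Type*} [Group G] {n : ℕ} (K : Fin n → Subgroup G) :
    Subgroup (Monoid.CoprodI (fun i => ↥(K i))) :=
  ⨅ k, (piHat K k).ker

/-- The `n`-fold Higgins commutator `H(K₁, …, Kₙ)` of subgroups of `G`: the image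
of the co-smash product under the homomorphism induced by the subgroup
inclusions. -/
def higgins {G : Type*} [Group G] {n : ℕ} (K : Fin n → Subgroup G) : Subgroup G :=
  (cosmash K).map (Monoid.CoprodI.lift (fun i => (K i).subtype))

open Monoid Subgroup SemidirectProduct

namespace HigginsAux

variable {G : Type*} [Group G] {n : ℕ} (K : Fin n → Subgroup G)

abbrev Ncl : Fin n → Subgroup G := fun i => Subgroup.normalClosure ((K i : Set G))

/-- conjugation endomorphism of the free product of normal closures -/
def conjEnd (g : G) : CoprodI (fun i => ↥(Ncl K i)) →* CoprodI (fun i => ↥(Ncl K i)) :=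
  CoprodI.lift fun i => (CoprodI.of (M := fun i => ↥(Ncl K i)) (i := i)).comp
    (MulAut.conjNormal g).toMonoidHom

lemma conjEnd_comp (g h : G) : (conjEnd K g).comp (conjEnd K h) = conjEnd K (g * h) := by
  apply CoprodI.ext_hom
  intro i
  ext m
  simp [conjEnd, map_mul]

lemma conjEnd_one : conjEnd K 1 = MonoidHom.id _ := by
  apply CoprodI.ext_hom
  intro i
  ext m
  simp [conjEnd]

/-- conjugation automorphism -/
def conjAut : G →* MulAut (CoprodI (fun i => ↥(Ncl K i))) where
  toFun g := MonoidHom.toMulEquiv (conjEnd K g) (conjEnd K g⁻¹)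
    (by rw [conjEnd_comp, inv_mul_cancel, conjEnd_one])
    (by rw [conjEnd_comp, mul_inv_cancel, conjEnd_one])
  map_one' := by
    ext x
    exact DFunLike.congr_fun (conjEnd_one K) x
  map_mul' g h := by
    ext x
    exact (DFunLike.congr_fun (conjEnd_comp K g h) x).symm

lemma conjAut_apply (g : G) (x) : conjAut K g x = conjEnd K g x := rfl

/-- the induced hom to G from the free product of normal closures -/
def kap' : CoprodI (fun i => ↥(Ncl K i)) →* G := CoprodI.lift fun i => (Ncl K i).subtype

/-- the multiplication hom from the semidirect product -/
def mu : (CoprodI (fun i => ↥(Ncl K i))) ⋊[conjAut K] G →* G :=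
  SemidirectProduct.lift (kap' K) (MonoidHom.id G) (by
    intro g
    apply CoprodI.ext_hom
    intro i
    ext m
    simp [kap', conjAut_apply, conjEnd])

@[simp] lemma mu_inl (p) : mu K (inl p) = kap' K p := by simp [mu]
@[simp] lemma mu_inr (g : G) : mu K (inr g) = g := by simp [mu]

/-- The snoc family. -/
abbrev S : Fin (n + 1) → Subgroup G := Fin.snoc K (⊤ : Subgroup G)

/-- the factor maps for Φ -/
def toFac : ∀ i : Fin (n + 1),
    ↥(S K i) →* (CoprodI (fun i => ↥(Ncl K i))) ⋊[conjAut K] G :=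
  Fin.lastCases (motive := fun i =>
      ↥(S K i) →* (CoprodI (fun i => ↥(Ncl K i))) ⋊[conjAut K] G)
    (inr.comp (Subgroup.topEquiv.toMonoidHom.comp
      (MulEquiv.subgroupCongr (by simp : S K (Fin.last n) = ⊤)).toMonoidHom))
    (fun j => inl.comp (((CoprodI.of (M := fun i => ↥(Ncl K i)) (i := j)).comp
      (Subgroup.inclusion (Subgroup.le_normalClosure))).comp
      (MulEquiv.subgroupCongr (by simp : S K j.castSucc = K j)).toMonoidHom))

def Phi : CoprodI (fun i => ↥(S K i)) →*
    (CoprodI (fun i => ↥(Ncl K i))) ⋊[conjAut K] G :=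
  CoprodI.lift (toFac K)

/-- The statement's κ for the snoc family equals μ ∘ Φ. -/
lemma mu_comp_Phi : (mu K).comp (Phi K) = CoprodI.lift (fun i => (S K i).subtype) := by
  apply CoprodI.ext_hom
  intro i
  induction i using Fin.lastCases with
  | last => ext m; simp [Phi, toFac]
  | cast j => ext m; simp [Phi, toFac, kap']

lemma rightHom_Phi (hn : 0 < n) {x} (hx : x ∈ cosmash (S K)) :
    rightHom (Phi K x) = 1 := by
  set j0 : Fin n := ⟨0, hn⟩
  have h0 : (rightHom.comp (Phi K)).comp (piHat (S K) (Fin.castSucc j0))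
      = rightHom.comp (Phi K) := by
    apply CoprodI.ext_hom
    intro i
    ext m
    by_cases h : i = Fin.castSucc j0
    · subst h; simp [piHat, Phi, toFac]
    · simp [piHat, h]
  have hker : piHat (S K) (Fin.castSucc j0) x = 1 :=
    Subgroup.mem_iInf.mp hx (Fin.castSucc j0)
  have := DFunLike.congr_fun h0 x
  simp only [MonoidHom.comp_apply, hker] at this
  rw [← this, map_one, map_one]

/-- The map π̂ₖ ⋊ id on the semidirect product. -/
def alpha (k : Fin n) :
    (CoprodI (fun i => ↥(Ncl K i))) ⋊[conjAut K] G →*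
      (CoprodI (fun i => ↥(Ncl K i))) ⋊[conjAut K] G :=
  SemidirectProduct.map (piHat (Ncl K) k) (MonoidHom.id G) (by
    intro g
    apply CoprodI.ext_hom
    intro i
    ext m
    by_cases h : i = k
    · subst h; simp [piHat, conjAut_apply, conjEnd]
    · simp [piHat, h, conjAut_apply, conjEnd])

lemma alpha_comp_Phi (k : Fin n) :
    (alpha K k).comp (Phi K) = (Phi K).comp (piHat (S K) (Fin.castSucc k)) := by
  apply CoprodI.ext_hom
  intro i
  induction i using Fin.lastCases with
  | last =>
    ext m <;>
    simp [alpha, Phi, toFac, piHat, (Fin.castSucc_lt_last k).ne', SemidirectProduct.map_inl, SemidirectProduct.map_inr, SemidirectProduct.left_inl, SemidirectProduct.right_inl, SemidirectProduct.left_inr, SemidirectProduct.right_inr]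
  | cast j =>
    by_cases h : j = k
    · subst h; ext m <;> simp [alpha, Phi, toFac, piHat, SemidirectProduct.map_inl, SemidirectProduct.map_inr, SemidirectProduct.left_inl, SemidirectProduct.right_inl, SemidirectProduct.left_inr, SemidirectProduct.right_inr]
    · ext m <;> simp [alpha, Phi, toFac, piHat, h, Fin.castSucc_inj, SemidirectProduct.map_inl, SemidirectProduct.map_inr, SemidirectProduct.left_inl, SemidirectProduct.right_inl, SemidirectProduct.left_inr, SemidirectProduct.right_inr]

end HigginsAux


/-- For `n ≥ 2` and arbitrary subgroups `K₁, …, Kₙ` of `G`, the `(n+1)`-fold Higgins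
commutator `H(K₁, …, Kₙ, ⊤)` is contained in the `n`-fold Higgins commutator of the
normal closures `H(K̄₁, …, K̄ₙ)`. -/
theorem higgins_top_le_higgins_normalClosure {G : Type*} [Group G] {n : ℕ} (hn : 2 ≤ n)
    (K : Fin n → Subgroup G) :
    higgins (Fin.snoc K (⊤ : Subgroup G)) ≤
      higgins (fun i => Subgroup.normalClosure ((K i : Set G))) := by
  intro g hg
  rw [higgins, Subgroup.mem_map] at hg
  obtain ⟨x, hx, rfl⟩ := hg
  have hn' : 0 < n := by omega
  set q := HigginsAux.Phi K x with hq
  have hr : q.right = 1 := HigginsAux.rightHom_Phi K hn' hx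
  have hql : q = SemidirectProduct.inl q.left := by
    conv_lhs => rw [← SemidirectProduct.inl_left_mul_inr_right q]
    rw [hr, map_one, mul_one]
  rw [higgins, Subgroup.mem_map]
  refine ⟨q.left, ?_, ?_⟩
  · rw [cosmash, Subgroup.mem_iInf]
    intro k
    rw [MonoidHom.mem_ker]
    have h1 : HigginsAux.alpha K k q = 1 := by
      rw [hq, ← MonoidHom.comp_apply, HigginsAux.alpha_comp_Phi, MonoidHom.comp_apply,
        MonoidHom.mem_ker.mp (Subgroup.mem_iInf.mp hx (Fin.castSucc k)), map_one]
    rw [hql] at h1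
    simp only [HigginsAux.alpha, SemidirectProduct.map_inl] at h1
    exact SemidirectProduct.inl_injective (by simpa using h1)
  · have h2 := DFunLike.congr_fun (HigginsAux.mu_comp_Phi K) x
    rw [MonoidHom.comp_apply, ← hq, hql, HigginsAux.mu_inl] at h2
    exact h2
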